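/- Let mw(G) denote the minimum width over all separator decompositions of G and tw(G) the treewidth of G. Then tw(G) ≤ 8·mw(G) − 1/3, i.e., mw(G) ≥ (1/8)·tw(G) + 1/24. -/

import Mathlib

/-- A full binary tree with a label at every node. -/
inductive BTree (β : Type*) where
  | leaf (b : β)
  | node (b : β) (l r : BTree β)

/-- The label at the root. -/
def BTree.label {β : Type*} : BTree β → β
  | .leaf b => b
  | .node b _ _ => b

/-- Number of nodes (leaves included). -/
def BTree.size {β : Type*} : BTree β → ℕ
  | .leaf _ => 1
  | .node _ l r => 1 + l.size + r.size

/-- `Subtree s t`: `s` occurs as a (rooted) subtree of `t`. -/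
inductive BTree.Subtree {β : Type*} : BTree β → BTree β → Prop where
  | refl (t : BTree β) : BTree.Subtree t t
  | left {s : BTree β} {b : β} {l r : BTree β} :
      BTree.Subtree s l → BTree.Subtree s (.node b l r)
  | right {s : BTree β} {b : β} {l r : BTree β} :
      BTree.Subtree s r → BTree.Subtree s (.node b l r)

/-- Vertex boundary of `R` in `G`. -/
def vBoundary {V : Type*} (G : SimpleGraph V) (R : Set V) : Set V :=
  {v | v ∉ R ∧ ∃ u ∈ R, G.Adj u v}

/-- A separator decomposition of `G`: each node carries `(Vᵢ, Sᵢ)`; leaves carry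
`(∅, ∅)`; at an internal node, `{V_j, V_k, Sᵢ}` partitions `Vᵢ` with no edge of
`G[Vᵢ]` between `V_j` and `V_k`.  (The root condition `V_r = V` is stated separately.) -/
def IsSepDecomp {V : Type*} (G : SimpleGraph V) : BTree (Set V × Set V) → Prop
  | .leaf b => b.1 = ∅ ∧ b.2 = ∅
  | .node b l r =>
      IsSepDecomp G l ∧ IsSepDecomp G r ∧
      l.label.1 ∪ r.label.1 ∪ b.2 = b.1 ∧
      Disjoint l.label.1 r.label.1 ∧ Disjoint l.label.1 b.2 ∧ Disjoint r.label.1 b.2 ∧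
      ∀ u ∈ l.label.1, ∀ v ∈ r.label.1, ¬ G.Adj u v

/-- The decomposition has width at most `s`: at every node, `|∂Vᵢ| ≤ s` and `|Sᵢ| ≤ s`. -/
def WidthLE {V : Type*} (G : SimpleGraph V) (s : ℕ) : BTree (Set V × Set V) → Prop
  | .leaf b => (vBoundary G b.1).ncard ≤ s ∧ b.2.ncard ≤ s
  | .node b l r => (vBoundary G b.1).ncard ≤ s ∧ b.2.ncard ≤ s ∧
      WidthLE G s l ∧ WidthLE G s r

/-- `S` meets every walk from `X` to `Y`: `X` and `Y` are disconnected in `G[V ∖ S]`. -/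
def SeparatesPaths {V : Type*} (G : SimpleGraph V) (S X Y : Set V) : Prop :=
  ∀ x ∈ X, ∀ y ∈ Y, ∀ p : G.Walk x y, ∃ v ∈ p.support, v ∈ S

/-- `S` is a balanced `W`-separator of `G`. -/
def IsBalancedSep {V : Type*} (G : SimpleGraph V) (W S : Set V) : Prop :=
  ∃ X Y : Set V, X.Nonempty ∧ Y.Nonempty ∧ Disjoint X Y ∧ X ∪ Y = W \ S ∧
    3 * X.ncard ≤ 2 * W.ncard ∧ 3 * Y.ncard ≤ 2 * W.ncard ∧
    SeparatesPaths G S X Y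

/-- A tree decomposition of `G`: a tree `T` on index type `ι` with bags `bag i ⊆ V`
covering all vertices and edges, such that for each vertex the set of bags
containing it induces a connected subgraph of `T`. -/
structure TreeDecomp {V : Type*} (G : SimpleGraph V) where
  ι : Type
  T : SimpleGraph ι
  connected : T.Connected
  acyclic : T.IsAcyclic
  bag : ι → Set V
  covers : ∀ v : V, ∃ i, v ∈ bag i
  coversEdges : ∀ u v : V, G.Adj u v → ∃ i, u ∈ bag i ∧ v ∈ bag i
  subtreeConn : ∀ v : V, (T.induce {i | v ∈ bag i}).Connected

namespace SD

/-- Valid positions in a binary tree. -/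
def pos {β : Type*} : List Bool → BTree β → Prop
  | [], _ => True
  | _ :: _, .leaf _ => False
  | false :: p, .node _ l _ => pos p l
  | true :: p, .node _ _ r => pos p r

/-- Subtree at a position (junk value at invalid positions). -/
def subAt {β : Type*} : List Bool → BTree β → BTree β
  | [], t => t
  | _ :: _, .leaf b => .leaf b
  | false :: p, .node _ l _ => subAt p l
  | true :: p, .node _ _ r => subAt p r

variable {β : Type*}

lemma pos_append : ∀ (p q : List Bool) (t : BTree β),
    pos (p ++ q) t ↔ pos p t ∧ pos q (subAt p t) := by
  intro p
  induction p with
  | nil => intro q t; simp [pos, subAt]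
  | cons x p ih =>
    intro q t
    cases t with
    | leaf b => cases x <;> simp [pos]
    | node b l r => cases x <;> simpa [pos, subAt] using ih q _

lemma subAt_append : ∀ (p q : List Bool) (t : BTree β),
    subAt (p ++ q) t = subAt q (subAt p t) := by
  intro p
  induction p with
  | nil => intro q t; simp [subAt]
  | cons x p ih =>
    intro q t
    cases t with
    | leaf b => cases x <;> induction q <;> simp [subAt]
    | node b l r => cases x <;> simpa [subAt] using ih q _

lemma pos_prefix {p q : List Bool} {t : BTree β} (hpre : p <+: q) (hq : pos q t) : pos p t := by
  obtain ⟨r, rfl⟩ := hpre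
  exact ((pos_append p r t).mp hq).1

variable {α : Type*} {G : SimpleGraph α}

lemma sepAt : ∀ (p : List Bool) (t : BTree (Set α × Set α)),
    IsSepDecomp G t → pos p t → IsSepDecomp G (subAt p t) := by
  intro p
  induction p with
  | nil => exact fun t h _ => h
  | cons x p ih =>
    intro t h hp
    cases t with
    | leaf b => cases x <;> exact hp.elim
    | node b l r =>
      obtain ⟨hl, hr, -⟩ := h
      cases x
      · exact ih l hl hp
      · exact ih r hr hp

lemma widthAt {s : ℕ} : ∀ (p : List Bool) (t : BTree (Set α × Set α)),
    WidthLE G s t → pos p t → WidthLE G s (subAt p t) := by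
  intro p
  induction p with
  | nil => exact fun t h _ => h
  | cons x p ih =>
    intro t h hp
    cases t with
    | leaf b => cases x <;> exact hp.elim
    | node b l r =>
      obtain ⟨-, -, hl, hr⟩ := h
      cases x
      · exact ih l hl hp
      · exact ih r hr hp

lemma width_root {s : ℕ} {t : BTree (Set α × Set α)} (h : WidthLE G s t) :
    (vBoundary G t.label.1).ncard ≤ s ∧ t.label.2.ncard ≤ s := by
  cases t with
  | leaf b => exact h
  | node b l r => exact ⟨h.1, h.2.1⟩

lemma S_sub_V {t : BTree (Set α × Set α)} (h : IsSepDecomp G t) : t.label.2 ⊆ t.label.1 := by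
  cases t with
  | leaf b =>
    show b.2 ⊆ b.1
    rw [h.1, h.2]
  | node b l r =>
    show b.2 ⊆ b.1
    rw [← h.2.2.1]
    exact Set.subset_union_right

lemma V_sub_root : ∀ (p : List Bool) (t : BTree (Set α × Set α)),
    IsSepDecomp G t → pos p t → (subAt p t).label.1 ⊆ t.label.1 := by
  intro p
  induction p with
  | nil => exact fun t _ _ => subset_rfl
  | cons x p ih =>
    intro t h hp
    cases t with
    | leaf b => cases x <;> exact hp.elim
    | node b l r =>
      obtain ⟨hl, hr, hu, -⟩ := h
      show _ ⊆ b.1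
      rw [← hu]
      cases x
      · exact (ih l hl hp).trans (Set.subset_union_left.trans Set.subset_union_left)
      · exact (ih r hr hp).trans (Set.subset_union_right.trans Set.subset_union_left)

lemma mem_root_of_S {t : BTree (Set α × Set α)} {q : List Bool} {v : α}
    (ht : IsSepDecomp G t) (hq : pos q t) (hS : v ∈ (subAt q t).label.2) : v ∈ t.label.1 :=
  V_sub_root q t ht hq (S_sub_V (sepAt q t ht hq) hS)

lemma mem_V_of_prefix {t : BTree (Set α × Set α)} {q p : List Bool} {v : α}
    (ht : IsSepDecomp G t) (hq : pos q t) (hS : v ∈ (subAt q t).label.2)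
    (hpre : p <+: q) : v ∈ (subAt p t).label.1 := by
  obtain ⟨r, rfl⟩ := hpre
  have hp : pos p t := ((pos_append p r t).mp hq).1
  have hr : pos r (subAt p t) := ((pos_append p r t).mp hq).2
  have h1 : IsSepDecomp G (subAt p t) := sepAt p t ht hp
  rw [subAt_append] at hS
  exact mem_root_of_S h1 hr hS

lemma prefix_of_mem_V {v : α} : ∀ (q : List Bool) (t : BTree (Set α × Set α)) (p : List Bool),
    IsSepDecomp G t → pos q t → v ∈ (subAt q t).label.2 →
    pos p t → v ∈ (subAt p t).label.1 → p <+: q := by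
  intro q
  induction q with
  | nil =>
    intro t p ht _ hS hp hV
    cases p with
    | nil => exact List.prefix_rfl
    | cons x p' =>
      exfalso
      cases t with
      | leaf b => cases x <;> exact hp.elim
      | node b l r =>
        obtain ⟨hl, hr, hu, hd1, hd2, hd3, -⟩ := ht
        cases x
        · exact Set.disjoint_left.mp hd2 (V_sub_root p' l hl hp hV) hS
        · exact Set.disjoint_left.mp hd3 (V_sub_root p' r hr hp hV) hS
  | cons y q' ih =>
    intro t p ht hq hS hp hV
    cases t with
    | leaf b => cases y <;> exact hq.elim
    | node b l r =>
      obtain ⟨hl, hr, hu, hd1, hd2, hd3, -⟩ := ht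
      cases p with
      | nil => exact List.nil_prefix
      | cons x p' =>
        cases x <;> cases y
        · exact List.cons_prefix_cons.mpr ⟨rfl, ih l p' hl hq hS hp hV⟩
        · exfalso
          exact Set.disjoint_left.mp hd1 (V_sub_root p' l hl hp hV)
            (mem_root_of_S hr hq hS)
        · exfalso
          exact Set.disjoint_left.mp hd1 (mem_root_of_S hl hq hS)
            (V_sub_root p' r hr hp hV)
        · exact List.cons_prefix_cons.mpr ⟨rfl, ih r p' hr hq hS hp hV⟩

lemma exists_S {v : α} : ∀ (t : BTree (Set α × Set α)), IsSepDecomp G t → v ∈ t.label.1 →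
    ∃ q, pos q t ∧ v ∈ (subAt q t).label.2 := by
  intro t
  induction t with
  | leaf b =>
    intro h hv
    exfalso
    have : v ∈ b.1 := hv
    rw [h.1] at this
    exact this
  | node b l r ihl ihr =>
    intro h hv
    obtain ⟨hl, hr, hu, -⟩ := h
    have hv' : v ∈ l.label.1 ∪ r.label.1 ∪ b.2 := by rw [hu]; exact hv
    rcases hv' with (hv' | hv') | hv'
    · obtain ⟨q, hq, hqS⟩ := ihl hl hv'
      exact ⟨false :: q, hq, hqS⟩
    · obtain ⟨q, hq, hqS⟩ := ihr hr hv'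
      exact ⟨true :: q, hq, hqS⟩
    · exact ⟨[], trivial, hv'⟩

lemma sib0 {u v : α} {x y : Bool} {t : BTree (Set α × Set α)} (ht : IsSepDecomp G t)
    (hu : u ∈ (subAt [x] t).label.1) (hv : v ∈ (subAt [y] t).label.1)
    (hxy : x ≠ y) (hp : pos [x] t) : ¬ G.Adj u v := by
  cases t with
  | leaf b => cases x <;> exact hp.elim
  | node b l r =>
    obtain ⟨-, -, -, -, -, -, hE⟩ := ht
    cases x <;> cases y
    · exact (hxy rfl).elim
    · exact hE u hu v hv
    · exact fun h => hE v hv u hu h.symm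
    · exact (hxy rfl).elim

lemma sib {u v : α} {x y : Bool} {c : List Bool} {t : BTree (Set α × Set α)}
    (ht : IsSepDecomp G t) (hx : pos (c ++ [x]) t) (hy : pos (c ++ [y]) t)
    (hxy : x ≠ y) (hu : u ∈ (subAt (c ++ [x]) t).label.1)
    (hv : v ∈ (subAt (c ++ [y]) t).label.1) : ¬ G.Adj u v := by
  rw [subAt_append] at hu hv
  exact sib0 (sepAt c t ht (pos_prefix ⟨[x], rfl⟩ hx)) hu hv hxy
    ((pos_append c [x] t).mp hx).2

lemma tri : ∀ (a b : List Bool), a <+: b ∨ b <+: a ∨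
    ∃ c x y r s, x ≠ y ∧ a = c ++ x :: r ∧ b = c ++ y :: s := by
  intro a
  induction a with
  | nil => exact fun b => Or.inl (List.nil_prefix)
  | cons x a' ih =>
    intro b
    cases b with
    | nil => exact Or.inr (Or.inl List.nil_prefix)
    | cons y b' =>
      by_cases hxy : x = y
      · subst hxy
        rcases ih b' with h | h | ⟨c, x', y', r, s, hne, ha, hb⟩
        · exact Or.inl (List.cons_prefix_cons.mpr ⟨rfl, h⟩)
        · exact Or.inr (Or.inl (List.cons_prefix_cons.mpr ⟨rfl, h⟩))
        · exact Or.inr (Or.inr ⟨x :: c, x', y', r, s, hne, by rw [ha]; rfl, by rw [hb]; rfl⟩)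
      · exact Or.inr (Or.inr ⟨[], x, y, a', b', hxy, rfl, rfl⟩)

open SimpleGraph

/-- Index type: valid positions of `t`. -/
def Idx (t : BTree β) : Type := {p : List Bool // pos p t}

/-- The tree graph on positions: parent/child adjacency. -/
def tg (t : BTree β) : SimpleGraph (Idx t) where
  Adj i j := (∃ x, j.1 = i.1 ++ [x]) ∨ (∃ x, i.1 = j.1 ++ [x])
  symm := ⟨fun i j h => h.symm⟩
  loopless := ⟨by
    rintro i (⟨x, h⟩ | ⟨x, h⟩) <;>
    · have := congrArg List.length h
      simp at this⟩

lemma tg_reach (t : BTree β) (i : Idx t) : (tg t).Reachable i ⟨[], trivial⟩ := by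
  obtain ⟨l, hl⟩ := i
  induction l using List.reverseRecOn with
  | nil => exact Reachable.refl _
  | append_singleton l x ih =>
    have hl' : pos l t := pos_prefix ⟨[x], rfl⟩ hl
    have hadj : (tg t).Adj ⟨l ++ [x], hl⟩ ⟨l, hl'⟩ := Or.inr ⟨x, rfl⟩
    exact hadj.reachable.trans (ih hl')

lemma tg_connected (t : BTree β) : (tg t).Connected := by
  have : Nonempty (Idx t) := ⟨⟨[], trivial⟩⟩
  exact Connected.mk (fun i j => (tg_reach t i).trans (tg_reach t j).symm)

lemma parent_eq {t : BTree β} {i j : Idx t} (h : (tg t).Adj i j)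
    (hlen : j.1.length ≤ i.1.length) : j.1 = i.1.dropLast := by
  rcases h with ⟨x, hx⟩ | ⟨x, hx⟩
  · exfalso
    have := congrArg List.length hx
    simp at this
    omega
  · rw [hx, List.dropLast_concat]

lemma two_nbrs {W : Type*} {H : SimpleGraph W} {x : W} (c : H.Walk x x) (hc : c.IsCycle) :
    ∃ y z, y ≠ z ∧ H.Adj x y ∧ H.Adj x z ∧ y ∈ c.support ∧ z ∈ c.support := by
  cases c with
  | nil => exact (hc.ne_nil rfl).elim
  | @cons _ b _ hadj w =>
    cases hw : w.reverse with
    | nil =>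
      exfalso
      have : w = Walk.nil := by
        have := congrArg Walk.reverse hw
        rwa [Walk.reverse_reverse] at this
      subst this
      exact H.loopless.irrefl x hadj
    | @cons _ z _ h2 w2 =>
      refine ⟨b, z, ?_, hadj, h2, ?_, ?_⟩
      · intro hbz
        have he : w.edges.reverse = s(x, z) :: w2.edges := by
          rw [← Walk.edges_reverse, hw, Walk.edges_cons]
        have hmem : s(x, z) ∈ w.edges := by
          rw [← List.mem_reverse, he]; exact List.mem_cons_self
        have hnodup : (Walk.cons hadj w).edges.Nodup :=
          hc.isCircuit.isTrail.edges_nodup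
        rw [Walk.edges_cons] at hnodup
        rw [← hbz] at hmem
        exact hnodup.notMem hmem
      · rw [Walk.support_cons]
        exact List.mem_cons_of_mem _ w.start_mem_support
      · rw [Walk.support_cons]
        refine List.mem_cons_of_mem _ ?_
        have : z ∈ w.reverse.support := by
          rw [hw, Walk.support_cons]
          exact List.mem_cons_of_mem _ w2.start_mem_support
        rwa [Walk.support_reverse, List.mem_reverse] at this

lemma tg_acyclic (t : BTree β) : (tg t).IsAcyclic := by
  classical
  intro v c hc
  obtain ⟨x, hx, hmax⟩ := Finset.exists_max_image c.support.toFinset (fun i => i.1.length)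
    ⟨v, List.mem_toFinset.mpr c.start_mem_support⟩
  replace hx := List.mem_toFinset.mp hx
  have hmax' : ∀ y ∈ c.support, y.1.length ≤ x.1.length :=
    fun y hy => hmax y (List.mem_toFinset.mpr hy)
  have hc' : (c.rotate x hx).IsCycle := hc.rotate hx
  have hsub : ∀ y ∈ (c.rotate x hx).support, y ∈ c.support := by
    intro y hy
    rw [Walk.support_eq_cons, List.mem_cons] at hy
    rcases hy with hy | hy
    · rw [hy]; exact hx
    · have : y ∈ c.support.tail := (Walk.support_rotate c x hx).mem_iff.mp hy
      rw [Walk.support_eq_cons]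
      exact List.mem_cons_of_mem _ this
  obtain ⟨y, z, hyz, hxy, hxz, hy, hz⟩ := two_nbrs (c.rotate x hx) hc'
  have ey : y.1 = x.1.dropLast := parent_eq hxy (hmax' y (hsub y hy))
  have ez : z.1 = x.1.dropLast := parent_eq hxz (hmax' z (hsub z hz))
  exact hyz (Subtype.ext (ey.trans ez.symm))

/-- The bag at a position. -/
def bagOf (G : SimpleGraph α) (t : BTree (Set α × Set α)) (i : Idx t) : Set α :=
  (subAt i.1 t).label.2 ∪ vBoundary G (subAt i.1 t).label.1

lemma edge_cover {t : BTree (Set α × Set α)} {u v : α} {a b : List Bool}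
    (ht : IsSepDecomp G t) (ha : pos a t) (haS : u ∈ (subAt a t).label.2)
    (hb : pos b t) (hbS : v ∈ (subAt b t).label.2) (hpre : a <+: b) (hadj : G.Adj u v) :
    u ∈ bagOf G t ⟨b, hb⟩ ∧ v ∈ bagOf G t ⟨b, hb⟩ := by
  by_cases hab : a = b
  · subst hab
    exact ⟨Or.inl haS, Or.inl hbS⟩
  · refine ⟨Or.inr ⟨?_, v, S_sub_V (sepAt b t ht hb) hbS, hadj.symm⟩, Or.inl hbS⟩
    intro huV
    have hba : b <+: a := prefix_of_mem_V a t b ht ha haS hb huV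
    exact hab (hpre.eq_of_length (le_antisymm hpre.length_le hba.length_le))

/-- Every vertex of the root part lands in some separator. -/
lemma subtree_conn {t : BTree (Set α × Set α)} (ht : IsSepDecomp G t) {v : α}
    {m : List Bool} (hm : pos m t) (hmS : v ∈ (subAt m t).label.2) :
    ((tg t).induce {i | v ∈ bagOf G t i}).Connected := by
  set A := {i : Idx t | v ∈ bagOf G t i} with hA
  have hmA : (⟨m, hm⟩ : Idx t) ∈ A := Or.inl hmS
  have step : ∀ i : Idx t, i ∈ A → i.1 ≠ m →
      ∃ j : Idx t, j ∈ A ∧ (tg t).Adj i j ∧ j.1.length < i.1.length := by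
    rintro ⟨p, hp⟩ hi hne
    rcases hi with hiS | ⟨hnV, u, huV, hadj⟩
    · exfalso
      have h1 : p <+: m := prefix_of_mem_V m t p ht hm hmS hp (S_sub_V (sepAt p t ht hp) hiS)
      have h2 : m <+: p := prefix_of_mem_V p t m ht hp hiS hm (S_sub_V (sepAt m t ht hm) hmS)
      exact hne (h1.eq_of_length (le_antisymm h1.length_le h2.length_le))
    · have hnpre : ¬ p <+: m := fun hp' => hnV (mem_V_of_prefix ht hm hmS hp')
      have hpne : p ≠ [] := by rintro rfl; exact hnpre (List.nil_prefix)
      rcases List.eq_nil_or_concat p with hpn | ⟨p', x, hpx⟩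
      · exact (hpne hpn).elim
      · rw [List.concat_eq_append] at hpx
        subst hpx
        have hp' : pos p' t := pos_prefix ⟨[x], rfl⟩ hp
        by_cases hpm : p' <+: m
        · by_cases hp'm : p' = m
          · subst hp'm
            exact ⟨⟨p', hp'⟩, Or.inl hmS, Or.inr ⟨x, rfl⟩, by simp⟩
          · exfalso
            obtain ⟨rest, hrest⟩ := hpm
            cases rest with
            | nil => exact hp'm (by simpa using hrest)
            | cons y r' =>
              have hy : y ≠ x := by
                rintro rfl
                exact hnpre ⟨r', by rw [← hrest]; simp⟩
              have hprey : p' ++ [y] <+: m := ⟨r', by rw [← hrest]; simp⟩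
              have hposy : pos (p' ++ [y]) t := pos_prefix hprey hm
              have hvy : v ∈ (subAt (p' ++ [y]) t).label.1 :=
                mem_V_of_prefix ht hm hmS hprey
              exact sib ht hp hposy (fun h => hy h.symm) huV hvy hadj
        · have hnv' : v ∉ (subAt p' t).label.1 :=
            fun hv' => hpm (prefix_of_mem_V m t p' ht hm hmS hp' hv')
          have huV' : u ∈ (subAt p' t).label.1 := by
            rw [subAt_append] at huV
            exact V_sub_root [x] (subAt p' t) (sepAt p' t ht hp')
              ((pos_append p' [x] t).mp hp).2 huV
          exact ⟨⟨p', hp'⟩, Or.inr ⟨hnv', u, huV', hadj⟩, Or.inr ⟨x, rfl⟩, by simp⟩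
  have key : ∀ (n : ℕ) (i : Idx t) (hi : i ∈ A), i.1.length ≤ n →
      ((tg t).induce A).Reachable ⟨i, hi⟩ ⟨⟨m, hm⟩, hmA⟩ := by
    intro n
    induction n with
    | zero =>
      intro i hi hlen
      by_cases h : i.1 = m
      · have : (⟨i, hi⟩ : A) = ⟨⟨m, hm⟩, hmA⟩ := Subtype.ext (Subtype.ext h)
        rw [this]
      · obtain ⟨j, hj, hadj, hlt⟩ := step i hi h
        omega
    | succ n ihn =>
      intro i hi hlen
      by_cases h : i.1 = m
      · have : (⟨i, hi⟩ : A) = ⟨⟨m, hm⟩, hmA⟩ := Subtype.ext (Subtype.ext h)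
        rw [this]
      · obtain ⟨j, hj, hadj, hlt⟩ := step i hi h
        have hadj' : ((tg t).induce A).Adj ⟨i, hi⟩ ⟨j, hj⟩ := hadj
        exact hadj'.reachable.trans (ihn j hj (by omega))
  have hne : Nonempty A := ⟨⟨⟨m, hm⟩, hmA⟩⟩
  exact Connected.mk (fun a b =>
    (key a.1.1.length a.1 a.2 le_rfl).trans (key b.1.1.length b.1 b.2 le_rfl).symm)

end SD

/-- If `G` has a separator decomposition of width at most `s`, then `G` has a tree
decomposition of width at most `8s - 1/3` (all bags of size ≤ 8s + 2/3),
i.e. `tw(G) ≤ 8·mw(G) - 1/3`, equivalently `mw(G) ≥ tw(G)/8 + 1/24`. -/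
theorem stmt_14 {V : Type} [Fintype V] (G : SimpleGraph V) (s : ℕ)
    (t : BTree (Set V × Set V)) (ht : IsSepDecomp G t)
    (hroot : t.label.1 = Set.univ) (hw : WidthLE G s t) :
    ∃ td : TreeDecomp G, ∀ i, ((td.bag i).ncard : ℚ) ≤ 8 * s + 2 / 3 := by
  classical
  have hmv : ∀ v : V, ∃ q, SD.pos q t ∧ v ∈ (SD.subAt q t).label.2 := by
    intro v
    exact SD.exists_S t ht (by rw [hroot]; exact Set.mem_univ v)
  refine ⟨⟨SD.Idx t, SD.tg t, SD.tg_connected t, SD.tg_acyclic t, SD.bagOf G t, ?_, ?_, ?_⟩, ?_⟩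
  · -- covers
    intro v
    obtain ⟨q, hq, hS⟩ := hmv v
    exact ⟨⟨q, hq⟩, Or.inl hS⟩
  · -- coversEdges
    intro u v huv
    obtain ⟨a, ha, haS⟩ := hmv u
    obtain ⟨b, hb, hbS⟩ := hmv v
    rcases SD.tri a b with hpre | hpre | ⟨c, x, y, r, s0, hxy, rfl, rfl⟩
    · exact ⟨⟨b, hb⟩, SD.edge_cover ht ha haS hb hbS hpre huv⟩
    · obtain ⟨h1, h2⟩ := SD.edge_cover ht hb hbS ha haS hpre huv.symm
      exact ⟨⟨a, ha⟩, h2, h1⟩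
    · exfalso
      have hpx : c ++ [x] <+: c ++ x :: r := ⟨r, by simp⟩
      have hpy : c ++ [y] <+: c ++ y :: s0 := ⟨s0, by simp⟩
      have hu' : u ∈ (SD.subAt (c ++ [x]) t).label.1 := SD.mem_V_of_prefix ht ha haS hpx
      have hv' : v ∈ (SD.subAt (c ++ [y]) t).label.1 := SD.mem_V_of_prefix ht hb hbS hpy
      exact SD.sib ht (SD.pos_prefix hpx ha) (SD.pos_prefix hpy hb) hxy hu' hv' huv
  · -- subtreeConn
    intro v
    obtain ⟨m, hm, hmS⟩ := hmv v
    exact SD.subtree_conn ht hm hmS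
  · -- size bound
    intro i
    have h1 : WidthLE G s (SD.subAt i.1 t) := SD.widthAt i.1 t hw i.2
    obtain ⟨hb1, hb2⟩ := SD.width_root h1
    have hn : (SD.bagOf G t i).ncard ≤ 2 * s := by
      refine le_trans (Set.ncard_union_le _ _) ?_
      omega
    calc ((SD.bagOf G t i).ncard : ℚ) ≤ ((2 * s : ℕ) : ℚ) := by exact_mod_cast hn
      _ ≤ 8 * s + 2 / 3 := by
          push_cast
          have : (0 : ℚ) ≤ (s : ℚ) := by positivity
          linarith
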